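/- Let C ⊣ U be an adjunction with U : A → B full and faithful, unit γ : Id ⇒ UC, and let Θ_γ(g) = { φ : UCX → Y | φ ∘ γ_X = g }. If (Q(g), q_g : Y → Q(g), θ_g ∈ Θ_γ(q_g ∘ g)) is a Θ_γ-cokernel of g : X → Y, then C(q_g) : CY → C Q(g) is an isomorphism. -/
import Mathlib


open CategoryTheory

/-- Let `L ⊣ U` with `U` full and faithful, `γ` the unit, and `Θ_γ` the induced structure of
nullhomotopies. If `(Q, q, θ)` is a `Θ_γ`-cokernel of `g : X ⟶ Y`, then `L(q)` is an
isomorphism. -/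
theorem stmt13 {A B : Type*} [Category A] [Category B]
    (L : B ⥤ A) (U : A ⥤ B) [U.Full] [U.Faithful] (adj : L ⊣ U)
    {X Y Q : B} (g : X ⟶ Y) (q : Y ⟶ Q) (θ : U.obj (L.obj X) ⟶ Q)
    (hθ : adj.unit.app X ≫ θ = g ≫ q)
    (coker : ∀ {W : B} (h : Y ⟶ W) (ψ : U.obj (L.obj X) ⟶ W),
      adj.unit.app X ≫ ψ = g ≫ h → ∃! h' : Q ⟶ W, q ≫ h' = h ∧ θ ≫ h' = ψ) :
    IsIso (L.map q) := by
  -- counit is an isomorphism componentwise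
  have hcu : ∀ Z : A, IsIso (adj.counit.app Z) := fun Z => inferInstance
  -- key fact: U.map (L.map (unit X)) = unit (U (L X))
  have key : U.map (L.map (adj.unit.app X)) = adj.unit.app (U.obj (L.obj X)) := by
    have t1 : U.map (L.map (adj.unit.app X)) ≫ U.map (adj.counit.app (L.obj X)) = 𝟙 _ := by
      simp [← U.map_comp, adj.left_triangle_components]
    have t2 : adj.unit.app (U.obj (L.obj X)) ≫ U.map (adj.counit.app (L.obj X)) = 𝟙 _ :=
      adj.right_triangle_components _
    have : IsIso (U.map (adj.counit.app (L.obj X))) := inferInstance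
    exact (cancel_mono (U.map (adj.counit.app (L.obj X)))).mp (t1.trans t2.symm)
  -- construct h' : Q ⟶ U (L Y)
  have hnat : adj.unit.app X ≫ U.map (L.map g) = g ≫ adj.unit.app Y := by
    simp
  obtain ⟨h', ⟨hq, hθ'⟩, _⟩ := coker (adj.unit.app Y) (U.map (L.map g)) hnat
  -- h' ≫ U.map (L.map q) = unit Q, via uniqueness
  have hu : h' ≫ U.map (L.map q) = adj.unit.app Q := by
    have hnatq : adj.unit.app Y ≫ U.map (L.map q) = q ≫ adj.unit.app Q := by
      simp
    have hnatθ : adj.unit.app (U.obj (L.obj X)) ≫ U.map (L.map θ) = θ ≫ adj.unit.app Q := by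
      simp
    have hcond : adj.unit.app X ≫ (θ ≫ adj.unit.app Q) = g ≫ (q ≫ adj.unit.app Q) := by
      rw [← Category.assoc, hθ, Category.assoc]
    obtain ⟨m, hm, hmu⟩ := coker (q ≫ adj.unit.app Q) (θ ≫ adj.unit.app Q) hcond
    have e1 : h' ≫ U.map (L.map q) = m := by
      apply hmu
      constructor
      · rw [← Category.assoc, hq, hnatq]
      · rw [← Category.assoc, hθ', ← U.map_comp, ← L.map_comp, ← hθ, L.map_comp, U.map_comp,
          key, hnatθ]
    have e2 : adj.unit.app Q = m := hmu _ ⟨hnatq.symm ▸ rfl, hnatθ.symm ▸ rfl⟩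
    rw [e1, e2]
  -- the inverse
  refine ⟨L.map h' ≫ adj.counit.app (L.obj Y), ?_, ?_⟩
  · rw [← Category.assoc, ← L.map_comp, hq, adj.left_triangle_components]
  · have cn : adj.counit.app (L.obj Y) ≫ L.map q =
        L.map (U.map (L.map q)) ≫ adj.counit.app (L.obj Q) := (adj.counit.naturality _).symm
    rw [Category.assoc, cn, ← Category.assoc, ← L.map_comp, hu, adj.left_triangle_components]
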